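/- For any bijection τ: D_N → D_N, the rearrangement operator T_τ: h_I ↦ h_{τ(I)} on BMO_N satisfies ‖T_τ x‖²_BMO ≤ ⟦τ(C)⟧ · ‖x‖²_BMO for every x with Haar support contained in a nonempty collection C ⊆ D_N; in particular ‖T_τ‖_{BMO_N} ≤ (N+1)^{1/2}. -/

import Mathlib

open Finset

/-- The set of dyadic intervals in `[0,1]` of length `≥ 2^{-N}`, encoded as
pairs `(ℓ, k)` with `ℓ ≤ N` and `k < 2^ℓ`, representing `I_{ℓ,k} = [k/2^ℓ, (k+1)/2^ℓ)`. -/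
def DN (N : ℕ) : Finset (ℕ × ℕ) :=
  (Finset.range (N + 1) ×ˢ Finset.range (2 ^ N)).filter fun p => p.2 < 2 ^ p.1

/-- `subInt q p` means the dyadic interval encoded by `q` is contained in the one
encoded by `p`. -/
def subInt (q p : ℕ × ℕ) : Prop := p.1 ≤ q.1 ∧ q.2 / 2 ^ (q.1 - p.1) = p.2

instance (q p : ℕ × ℕ) : Decidable (subInt q p) :=
  inferInstanceAs (Decidable (_ ∧ _))

/-- Length of the dyadic interval encoded by `p`: `2^{-ℓ}`. -/
noncomputable def len (p : ℕ × ℕ) : ℝ := (2 : ℝ)⁻¹ ^ p.1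

/-- Carleson constant of a finite collection of (encoded) dyadic intervals;
`sSup ∅ = 0` in `ℝ`, so the empty collection gets `0`. -/
noncomputable def carleson (C : Finset (ℕ × ℕ)) : ℝ :=
  sSup {v : ℝ | ∃ p ∈ C, v = (∑ q ∈ C.filter (fun q => subInt q p), len q) / len p}

/-- Squared `BMO_N` norm of a function `x = Σ_{I ∈ D_N} x_I h_I`, given by its
coefficient function: `‖x‖²_BMO = sup_{I ∈ D_N} (1/|I|) Σ_{J ⊆ I} |x_J|² |J|`. -/
noncomputable def bmoSq (N : ℕ) (x : ℕ × ℕ → ℝ) : ℝ :=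
  sSup {v : ℝ | ∃ p ∈ DN N,
    v = (∑ q ∈ (DN N).filter (fun q => subInt q p), (x q) ^ 2 * len q) / len p}

/- ---------- auxiliary lemmas ---------- -/

lemma mem_DN_iff {N : ℕ} {p : ℕ × ℕ} : p ∈ DN N ↔ p.1 ≤ N ∧ p.2 < 2 ^ p.1 := by
  simp only [DN, mem_filter, mem_product, mem_range]
  constructor
  · rintro ⟨⟨h1, _⟩, h3⟩; exact ⟨by omega, h3⟩
  · rintro ⟨h1, h2⟩
    exact ⟨⟨by omega, lt_of_lt_of_le h2 (Nat.pow_le_pow_right (by norm_num) h1)⟩, h2⟩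

lemma len_pos (p : ℕ × ℕ) : 0 < len p := by unfold len; positivity

lemma subInt_refl (p : ℕ × ℕ) : subInt p p := ⟨le_refl _, by simp⟩

lemma subInt_trans {q r p : ℕ × ℕ} (h1 : subInt q r) (h2 : subInt r p) : subInt q p := by
  refine ⟨h2.1.trans h1.1, ?_⟩
  rw [show q.1 - p.1 = (q.1 - r.1) + (r.1 - p.1) by
      have := h1.1; have := h2.1; omega,
    pow_add, ← Nat.div_div_eq_div_mul, h1.2, h2.2]

lemma subInt_eq_of_le {q p : ℕ × ℕ} (h : subInt q p) (hle : q.1 ≤ p.1) : q = p := by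
  have h1 : q.1 = p.1 := le_antisymm hle h.1
  have h2 := h.2
  rw [h1, Nat.sub_self, pow_zero, Nat.div_one] at h2
  exact Prod.ext h1 h2

lemma subInt_nested {q p p' : ℕ × ℕ} (h1 : subInt q p) (h2 : subInt q p')
    (h : p.1 ≤ p'.1) : subInt p' p := by
  refine ⟨h, ?_⟩
  have hh := h1.2
  rw [show q.1 - p.1 = (q.1 - p'.1) + (p'.1 - p.1) by
      have := h2.1; omega,
    pow_add, ← Nat.div_div_eq_div_mul, h2.2] at hh
  exact hh

lemma card_filter_div {ℓ j c : ℕ} (hj : j ≤ ℓ) (hc : c < 2 ^ j) :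
    ((range (2 ^ ℓ)).filter (fun k => k / 2 ^ (ℓ - j) = c)).card = 2 ^ (ℓ - j) := by
  have hd : 0 < 2 ^ (ℓ - j) := Nat.pow_pos (by norm_num)
  have hkey : (range (2 ^ ℓ)).filter (fun k => k / 2 ^ (ℓ - j) = c)
      = Finset.Ico (c * 2 ^ (ℓ - j)) ((c + 1) * 2 ^ (ℓ - j)) := by
    ext k
    simp only [mem_filter, mem_range, Finset.mem_Ico]
    have hdiv : k / 2 ^ (ℓ - j) = c ↔ c * 2 ^ (ℓ - j) ≤ k ∧ k < (c + 1) * 2 ^ (ℓ - j) := by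
      rw [← Nat.le_div_iff_mul_le hd, ← Nat.div_lt_iff_lt_mul hd]; omega
    have hup : (c + 1) * 2 ^ (ℓ - j) ≤ 2 ^ ℓ := by
      calc (c + 1) * 2 ^ (ℓ - j) ≤ 2 ^ j * 2 ^ (ℓ - j) := Nat.mul_le_mul_right _ hc
        _ = 2 ^ ℓ := by rw [← pow_add]; congr 1; omega
    constructor
    · rintro ⟨-, h⟩; exact hdiv.mp h
    · intro h; exact ⟨lt_of_lt_of_le h.2 hup, hdiv.mpr h⟩
  rw [hkey, Nat.card_Ico, Nat.add_mul, one_mul, Nat.add_sub_cancel_left]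

/-- The set of level-`N` leaves below an interval. -/
def leafset (N : ℕ) (r : ℕ × ℕ) : Finset ℕ :=
  (range (2 ^ N)).filter (fun k => k / 2 ^ (N - r.1) = r.2)

lemma mem_leafset {N : ℕ} {r : ℕ × ℕ} (hr : r.1 ≤ N) {k : ℕ} :
    k ∈ leafset N r ↔ k < 2 ^ N ∧ subInt (N, k) r := by
  simp [leafset, subInt, hr]

lemma card_leafset {N : ℕ} {r : ℕ × ℕ} (hr : r ∈ DN N) :
    (leafset N r).card = 2 ^ (N - r.1) :=
  card_filter_div (mem_DN_iff.1 hr).1 (mem_DN_iff.1 hr).2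

lemma sum_biUnion_le_aux {α β : Type*} [DecidableEq β] {s : Finset α} {t : α → Finset β}
    {f : β → ℝ} (hf : ∀ b, 0 ≤ f b) :
    ∑ b ∈ s.biUnion t, f b ≤ ∑ a ∈ s, ∑ b ∈ t a, f b := by
  classical
  induction s using Finset.induction_on with
  | empty => simp
  | @insert a s ha ih =>
    rw [Finset.biUnion_insert, Finset.sum_insert ha]
    have h1 : ∑ b ∈ t a ∪ s.biUnion t, f b
        ≤ ∑ b ∈ t a, f b + ∑ b ∈ s.biUnion t, f b := by
      have h2 := Finset.sum_union_inter (s₁ := t a) (s₂ := s.biUnion t) (f := f)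
      have h3 : 0 ≤ ∑ b ∈ t a ∩ s.biUnion t, f b := Finset.sum_nonneg fun b _ => hf b
      linarith
    linarith [ih]

/-- Packing lemma: pairwise non-nested intervals inside `p` have total length `≤ len p`. -/
lemma packing {N : ℕ} {p : ℕ × ℕ} (hp : p ∈ DN N) {S : Finset (ℕ × ℕ)}
    (hS : S ⊆ DN N) (hsub : ∀ r ∈ S, subInt r p)
    (hmax : ∀ r ∈ S, ∀ r' ∈ S, subInt r r' → r' = r) :
    ∑ r ∈ S, len r ≤ len p := by
  classical
  have hpN : p.1 ≤ N := (mem_DN_iff.1 hp).1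
  have hdisj : ∀ r ∈ S, ∀ r' ∈ S, r ≠ r' → Disjoint (leafset N r) (leafset N r') := by
    intro r hr r' hr' hne
    rw [Finset.disjoint_left]
    intro k hk hk'
    have hrN := (mem_DN_iff.1 (hS hr)).1
    have hrN' := (mem_DN_iff.1 (hS hr')).1
    have h1 : subInt (N, k) r := ((mem_leafset hrN).1 hk).2
    have h2 : subInt (N, k) r' := ((mem_leafset hrN').1 hk').2
    rcases le_total r.1 r'.1 with h | h
    · exact hne (hmax r' hr' r hr (subInt_nested h1 h2 h))
    · exact hne (hmax r hr r' hr' (subInt_nested h2 h1 h)).symm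
  have hnat : ∑ r ∈ S, 2 ^ (N - r.1) ≤ 2 ^ (N - p.1) := by
    have h1 : ∑ r ∈ S, 2 ^ (N - r.1) = ∑ r ∈ S, (leafset N r).card :=
      Finset.sum_congr rfl fun r hr => (card_leafset (hS hr)).symm
    rw [h1, ← Finset.card_biUnion hdisj]
    have h2 : S.biUnion (leafset N) ⊆ leafset N p := by
      intro k hk
      simp only [Finset.mem_biUnion] at hk
      obtain ⟨r, hr, hk⟩ := hk
      have hrN := (mem_DN_iff.1 (hS hr)).1
      have hmem := (mem_leafset hrN).1 hk
      exact (mem_leafset hpN).2 ⟨hmem.1, subInt_trans hmem.2 (hsub r hr)⟩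
    calc (S.biUnion (leafset N)).card ≤ (leafset N p).card := Finset.card_le_card h2
      _ = 2 ^ (N - p.1) := card_leafset hp
  have hlen : ∀ r : ℕ × ℕ, r.1 ≤ N → len r = (2 : ℝ)⁻¹ ^ N * 2 ^ (N - r.1) := by
    intro r hr
    have hsplit : (2 : ℝ)⁻¹ ^ N = 2⁻¹ ^ (N - r.1) * 2⁻¹ ^ r.1 := by
      rw [← pow_add]; congr 1; omega
    have h12 : ((2 : ℝ)⁻¹) ^ (N - r.1) * 2 ^ (N - r.1) = 1 := by
      rw [← mul_pow]; norm_num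
    unfold len
    rw [hsplit]
    calc (2 : ℝ)⁻¹ ^ r.1 = ((2 : ℝ)⁻¹ ^ (N - r.1) * 2 ^ (N - r.1)) * 2⁻¹ ^ r.1 := by
          rw [h12, one_mul]
      _ = 2⁻¹ ^ (N - r.1) * 2⁻¹ ^ r.1 * 2 ^ (N - r.1) := by ring
  calc ∑ r ∈ S, len r = ∑ r ∈ S, (2 : ℝ)⁻¹ ^ N * 2 ^ (N - r.1) :=
        Finset.sum_congr rfl fun r hr => hlen r (mem_DN_iff.1 (hS hr)).1
    _ = (2 : ℝ)⁻¹ ^ N * ∑ r ∈ S, (2 : ℝ) ^ (N - r.1) := by rw [Finset.mul_sum]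
    _ ≤ (2 : ℝ)⁻¹ ^ N * 2 ^ (N - p.1) := by
        refine mul_le_mul_of_nonneg_left ?_ (by positivity)
        exact_mod_cast Nat.cast_le.mpr hnat
    _ = len p := (hlen p hpN).symm

/-- Total length of all dyadic subintervals of `p` (within `D_N`) is `≤ (N+1) len p`. -/
lemma sum_len_sub_le {N : ℕ} {p : ℕ × ℕ} (hp : p ∈ DN N) :
    ∑ q ∈ (DN N).filter (fun q => subInt q p), len q ≤ ((N : ℝ) + 1) * len p := by
  classical
  set s := (DN N).filter (fun q => subInt q p) with hs
  have hmaps : ∀ q ∈ s, q.1 ∈ range (N + 1) := by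
    intro q hq
    have := (mem_DN_iff.1 (Finset.mem_filter.1 hq).1).1
    exact mem_range.2 (by omega)
  rw [← Finset.sum_fiberwise_of_maps_to hmaps len]
  have hbound : ∀ ℓ ∈ range (N + 1),
      ∑ q ∈ s.filter (fun q => q.1 = ℓ), len q ≤ len p := by
    intro ℓ _
    refine packing hp ?_ ?_ ?_
    · intro q hq; exact (Finset.mem_filter.1 (Finset.mem_filter.1 hq).1).1
    · intro q hq; exact (Finset.mem_filter.1 (Finset.mem_filter.1 hq).1).2
    · intro r hr r' hr' hsub'
      have h1 : r.1 = ℓ := (Finset.mem_filter.1 hr).2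
      have h2 : r'.1 = ℓ := (Finset.mem_filter.1 hr').2
      exact (subInt_eq_of_le hsub' (by omega)).symm
  calc ∑ ℓ ∈ range (N + 1), ∑ q ∈ s.filter (fun q => q.1 = ℓ), len q
      ≤ ∑ _ℓ ∈ range (N + 1), len p := Finset.sum_le_sum hbound
    _ = ((N : ℝ) + 1) * len p := by
        rw [Finset.sum_const, card_range, nsmul_eq_mul]; push_cast; ring

lemma setOf_eq_image (s : Finset (ℕ × ℕ)) (f : ℕ × ℕ → ℝ) :
    {v : ℝ | ∃ p ∈ s, v = f p} = ↑(s.image f) := by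
  ext v
  simp only [Set.mem_setOf_eq, Finset.coe_image, Set.mem_image, Finset.mem_coe]
  constructor
  · rintro ⟨p, hp, rfl⟩; exact ⟨p, hp, rfl⟩
  · rintro ⟨p, hp, rfl⟩; exact ⟨p, hp, rfl⟩

lemma le_sSup_finset {s : Finset (ℕ × ℕ)} (f : ℕ × ℕ → ℝ) {a : ℕ × ℕ} (ha : a ∈ s) :
    f a ≤ sSup {v : ℝ | ∃ p ∈ s, v = f p} := by
  rw [setOf_eq_image]
  exact le_csSup (s.image f).bddAbove
    (by simp only [Finset.coe_image, Set.mem_image, Finset.mem_coe]; exact ⟨a, ha, rfl⟩)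

/-- For any bijection `τ` of `D_N`, the rearrangement operator `T_τ : h_I ↦ h_{τ(I)}`
satisfies `‖T_τ x‖²_BMO ≤ ⟦τ(C)⟧ ‖x‖²_BMO` whenever the Haar support of `x` is
contained in the nonempty collection `C ⊆ D_N`; in particular
`‖T_τ x‖²_BMO ≤ (N+1) ‖x‖²_BMO`, i.e. `‖T_τ‖ ≤ (N+1)^{1/2}`.
Here `y` is the coefficient function of `T_τ x`, i.e. `y_{τ(I)} = x_I`. -/
theorem rearrangement_bmo_bound (N : ℕ) (τ : ℕ × ℕ → ℕ × ℕ)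
    (hbij : Set.BijOn τ (DN N) (DN N))
    (C : Finset (ℕ × ℕ)) (hC : C ⊆ DN N) (hne : C.Nonempty)
    (x y : ℕ × ℕ → ℝ) (hsupp : ∀ p, x p ≠ 0 → p ∈ C)
    (hy : ∀ p ∈ DN N, y (τ p) = x p) :
    bmoSq N y ≤ carleson (C.image τ) * bmoSq N x ∧
    bmoSq N y ≤ ((N : ℝ) + 1) * bmoSq N x := by
  classical
  set B := bmoSq N x with hB
  set K := carleson (C.image τ) with hKdef
  have hτC : C.image τ ⊆ DN N := by
    intro q hq
    simp only [Finset.mem_image] at hq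
    obtain ⟨I, hI, rfl⟩ := hq
    exact Finset.mem_coe.1 (hbij.mapsTo (Finset.mem_coe.2 (hC hI)))
  -- nonnegativity of B
  have hvalx_nonneg : ∀ p : ℕ × ℕ,
      0 ≤ (∑ q ∈ (DN N).filter (fun q => subInt q p), (x q) ^ 2 * len q) / len p := by
    intro p
    exact div_nonneg
      (Finset.sum_nonneg fun q _ => mul_nonneg (sq_nonneg _) (len_pos q).le)
      (len_pos p).le
  have hBnonneg : 0 ≤ B := by
    obtain ⟨p0, hp0⟩ := hne
    have hv := le_sSup_finset
      (fun p => (∑ q ∈ (DN N).filter (fun q => subInt q p), (x q) ^ 2 * len q) / len p)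
      (hC hp0)
    exact le_trans (hvalx_nonneg p0) hv
  -- coefficient bound
  have hxB : ∀ I ∈ DN N, x I ^ 2 ≤ B := by
    intro I hI
    have hv := le_sSup_finset
      (fun p => (∑ q ∈ (DN N).filter (fun q => subInt q p), (x q) ^ 2 * len q) / len p)
      hI
    refine le_trans ?_ hv
    rw [le_div_iff₀ (len_pos I)]
    exact Finset.single_le_sum (f := fun q => x q ^ 2 * len q)
      (fun q _ => mul_nonneg (sq_nonneg _) (len_pos q).le)
      (Finset.mem_filter.2 ⟨hI, subInt_refl I⟩)
  -- facts about y
  have hyq : ∀ q ∈ DN N, (y q ≠ 0 → q ∈ C.image τ) ∧ y q ^ 2 ≤ B := by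
    intro q hq
    obtain ⟨I, hI, rfl⟩ := hbij.surjOn (Finset.mem_coe.2 hq)
    have hIDN : I ∈ DN N := Finset.mem_coe.1 hI
    rw [hy I hIDN]
    exact ⟨fun h => Finset.mem_image_of_mem τ (hsupp I h), hxB I hIDN⟩
  -- Carleson constant facts
  have hKval : ∀ r ∈ C.image τ,
      ∑ q ∈ (C.image τ).filter (fun q => subInt q r), len q ≤ K * len r := by
    intro r hr
    have hv := le_sSup_finset
      (fun p => (∑ q ∈ (C.image τ).filter (fun q => subInt q p), len q) / len p) hr
    exact (div_le_iff₀ (len_pos r)).1 hv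
  have hKnonneg : 0 ≤ K := by
    obtain ⟨p0, hp0⟩ := hne
    have hr : τ p0 ∈ C.image τ := Finset.mem_image_of_mem τ hp0
    have hv := le_sSup_finset
      (fun p => (∑ q ∈ (C.image τ).filter (fun q => subInt q p), len q) / len p) hr
    refine le_trans ?_ hv
    exact div_nonneg (Finset.sum_nonneg fun q _ => (len_pos q).le) (len_pos _).le
  have hKN : K ≤ (N : ℝ) + 1 := by
    rw [hKdef, carleson]
    apply Real.sSup_le
    · rintro v ⟨r, hr, rfl⟩
      rw [div_le_iff₀ (len_pos r)]
      calc ∑ q ∈ (C.image τ).filter (fun q => subInt q r), len q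
          ≤ ∑ q ∈ (DN N).filter (fun q => subInt q r), len q :=
            Finset.sum_le_sum_of_subset_of_nonneg
              (Finset.filter_subset_filter _ hτC) (fun q _ _ => (len_pos q).le)
        _ ≤ ((N : ℝ) + 1) * len r := sum_len_sub_le (hτC hr)
    · positivity
  -- main pointwise bound
  have hmain : ∀ p ∈ DN N,
      ∑ q ∈ (DN N).filter (fun q => subInt q p), (y q) ^ 2 * len q ≤ K * B * len p := by
    intro p hp
    set E := (C.image τ).filter (fun q => subInt q p) with hEdef
    have hstep1 : ∑ q ∈ (DN N).filter (fun q => subInt q p), (y q) ^ 2 * len q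
        = ∑ q ∈ E, (y q) ^ 2 * len q := by
      symm
      refine Finset.sum_subset (Finset.filter_subset_filter _ hτC) ?_
      intro q hq hq'
      have hqDN := (Finset.mem_filter.1 hq).1
      have hqp := (Finset.mem_filter.1 hq).2
      have hy0 : y q = 0 := by
        by_contra h
        exact hq' (Finset.mem_filter.2 ⟨(hyq q hqDN).1 h, hqp⟩)
      simp [hy0]
    rw [hstep1]
    -- maximal elements of E
    set Emax := E.filter (fun r => ∀ r' ∈ E, subInt r r' → r' = r) with hEmaxdef
    have hEsubDN : E ⊆ DN N := (Finset.filter_subset _ _).trans hτC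
    have hcover : E ⊆ Emax.biUnion (fun r => E.filter (fun q => subInt q r)) := by
      intro q hq
      have hMne : (E.filter (fun r => subInt q r)).Nonempty :=
        ⟨q, Finset.mem_filter.2 ⟨hq, subInt_refl q⟩⟩
      obtain ⟨r, hrM, hrmin⟩ := Finset.exists_min_image _ (fun r => r.1) hMne
      have hrE := (Finset.mem_filter.1 hrM).1
      have hqr := (Finset.mem_filter.1 hrM).2
      have hrmax : r ∈ Emax := by
        refine Finset.mem_filter.2 ⟨hrE, ?_⟩
        intro r' hr' hsub'
        have hqr' : subInt q r' := subInt_trans hqr hsub'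
        have hle : r.1 ≤ r'.1 := hrmin r' (Finset.mem_filter.2 ⟨hr', hqr'⟩)
        exact (subInt_eq_of_le hsub' hle).symm
      exact Finset.mem_biUnion.2 ⟨r, hrmax, Finset.mem_filter.2 ⟨hq, hqr⟩⟩
    have hElen : ∑ q ∈ E, len q ≤ K * len p := by
      have hinner : ∀ r ∈ Emax, ∑ q ∈ E.filter (fun q => subInt q r), len q ≤ K * len r := by
        intro r hr
        have hrE := (Finset.mem_filter.1 hr).1
        have hrimg : r ∈ C.image τ := (Finset.mem_filter.1 hrE).1
        calc ∑ q ∈ E.filter (fun q => subInt q r), len q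
            ≤ ∑ q ∈ (C.image τ).filter (fun q => subInt q r), len q := by
              refine Finset.sum_le_sum_of_subset_of_nonneg ?_ (fun q _ _ => (len_pos q).le)
              intro q hq
              have h1 := (Finset.mem_filter.1 hq).1
              exact Finset.mem_filter.2 ⟨(Finset.mem_filter.1 h1).1, (Finset.mem_filter.1 hq).2⟩
          _ ≤ K * len r := hKval r hrimg
      have hpack : ∑ r ∈ Emax, len r ≤ len p := by
        refine packing hp ((Finset.filter_subset _ _).trans hEsubDN) ?_ ?_
        · intro r hr
          exact (Finset.mem_filter.1 (Finset.mem_filter.1 hr).1).2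
        · intro r hr r' hr' hsub'
          exact (Finset.mem_filter.1 hr).2 r' (Finset.mem_filter.1 hr').1 hsub'
      calc ∑ q ∈ E, len q
          ≤ ∑ q ∈ Emax.biUnion (fun r => E.filter (fun q => subInt q r)), len q :=
            Finset.sum_le_sum_of_subset_of_nonneg hcover (fun q _ _ => (len_pos q).le)
        _ ≤ ∑ r ∈ Emax, ∑ q ∈ E.filter (fun q => subInt q r), len q :=
            sum_biUnion_le_aux (fun q => (len_pos q).le)
        _ ≤ ∑ r ∈ Emax, K * len r := Finset.sum_le_sum hinner
        _ = K * ∑ r ∈ Emax, len r := by rw [Finset.mul_sum]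
        _ ≤ K * len p := mul_le_mul_of_nonneg_left hpack hKnonneg
    calc ∑ q ∈ E, (y q) ^ 2 * len q
        ≤ ∑ q ∈ E, B * len q := by
          refine Finset.sum_le_sum fun q hq => ?_
          exact mul_le_mul_of_nonneg_right
            ((hyq q (hτC (Finset.mem_filter.1 hq).1)).2) (len_pos q).le
      _ = B * ∑ q ∈ E, len q := by rw [Finset.mul_sum]
      _ ≤ B * (K * len p) := mul_le_mul_of_nonneg_left hElen hBnonneg
      _ = K * B * len p := by ring
  have hyK : bmoSq N y ≤ K * B := by
    rw [bmoSq]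
    apply Real.sSup_le
    · rintro v ⟨p, hp, rfl⟩
      rw [div_le_iff₀ (len_pos p)]
      exact hmain p hp
    · exact mul_nonneg hKnonneg hBnonneg
  exact ⟨hyK, hyK.trans (mul_le_mul_of_nonneg_right hKN hBnonneg)⟩
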